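/- Let (X,d_X) and (Y,d_Y) be metric spaces and let Φ : X → Y be a weak similarity. If the equivalence (0 ∈ ac(D(X))) ⇔ (0 ∈ ac(D(Y))) holds, then X and Y are homeomorphic (indeed Φ is a homeomorphism). -/

import Mathlib

open Filter

/-- The distance set `D(X)` of a metric space `X`. -/
def distSetM (X : Type*) [MetricSpace X] : Set ℝ := {r | ∃ x y : X, dist x y = r}

lemma aux_gap {Z : Type*} [MetricSpace Z]
    (h : ¬ AccPt (0 : ℝ) (𝓟 (distSetM Z))) :
    ∃ δ > 0, ∀ z w : Z, dist z w < δ → z = w := by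
  rw [accPt_iff_nhds] at h
  push_neg at h
  obtain ⟨U, hU, hsmall⟩ := h
  obtain ⟨ε, hε, hball⟩ := Metric.mem_nhds_iff.mp hU
  refine ⟨ε, hε, fun z w hzw => ?_⟩
  have hmem : dist z w ∈ U := hball (by
    simp [Real.norm_eq_abs, abs_of_nonneg dist_nonneg, hzw, Metric.mem_ball,
      Real.dist_eq])
  have := hsmall (dist z w) ⟨hmem, ⟨z, w, rfl⟩⟩
  exact dist_eq_zero.mp this

lemma aux_acc {Z : Type*} [MetricSpace Z]
    (h : AccPt (0 : ℝ) (𝓟 (distSetM Z))) {ε : ℝ} (hε : 0 < ε) :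
    ∃ r ∈ distSetM Z, 0 < r ∧ r < ε := by
  obtain ⟨r, ⟨hrball, hrC⟩, hrne⟩ :=
    accPt_iff_nhds.mp h (Metric.ball 0 ε) (Metric.ball_mem_nhds _ hε)
  obtain ⟨a, b, hab⟩ := hrC
  have hr0 : 0 ≤ r := hab ▸ dist_nonneg
  refine ⟨r, ⟨a, b, hab⟩, lt_of_le_of_ne hr0 (Ne.symm hrne), ?_⟩
  have h2 := Metric.mem_ball.mp hrball
  rw [Real.dist_eq, sub_zero, abs_of_nonneg hr0] at h2
  exact h2

theorem stmt4 {X Y : Type*} [MetricSpace X] [MetricSpace Y]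
    (Φ : X → Y) (f : ℝ → ℝ)
    (hsurj : Function.Surjective Φ)
    (hmono : StrictMonoOn f (distSetM Y))
    (hmaps : Set.MapsTo f (distSetM Y) (distSetM X))
    (heq : ∀ x y : X, dist x y = f (dist (Φ x) (Φ y)))
    (hac : AccPt (0 : ℝ) (𝓟 (distSetM X)) ↔ AccPt (0 : ℝ) (𝓟 (distSetM Y))) :
    ∃ e : X ≃ₜ Y, ⇑e = Φ := by
  classical
  have hf0 : ∀ x : X, f 0 = 0 := fun x => by
    have h := heq x x
    simpa using h.symm
  have hinj : Function.Injective Φ := by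
    intro a b hab
    have h := heq a b
    rw [hab, dist_self, hf0 a] at h
    exact dist_eq_zero.mp h
  set e0 : X ≃ Y := Equiv.ofBijective Φ ⟨hinj, hsurj⟩ with he0
  have hΦsymm : ∀ y : Y, Φ (e0.symm y) = y := fun y => e0.apply_symm_apply y
  have hdistY : ∀ y y' : Y, dist y y' ∈ distSetM Y := fun y y' => ⟨y, y', rfl⟩
  refine ⟨⟨e0, ?_, ?_⟩, rfl⟩
  · -- continuity of Φ
    rw [Metric.continuous_iff]
    intro b ε hε
    by_cases hY : AccPt (0 : ℝ) (𝓟 (distSetM Y))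
    · obtain ⟨s, hsY, hs0, hsε⟩ := aux_acc hY hε
      have h0Y : (0 : ℝ) ∈ distSetM Y := ⟨Φ b, Φ b, dist_self _⟩
      have hfs : 0 < f s := by
        have := hmono h0Y hsY hs0
        rwa [hf0 b] at this
      refine ⟨f s, hfs, fun a hab => ?_⟩
      have hd : dist (Φ a) (Φ b) ∈ distSetM Y := hdistY _ _
      have hlt : dist (Φ a) (Φ b) < s := by
        by_contra hge
        push_neg at hge
        have hle := (hmono.le_iff_le hsY hd).mpr hge
        rw [← heq a b] at hle
        exact absurd hab (not_lt.mpr hle)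
      calc dist (e0 a) (e0 b) = dist (Φ a) (Φ b) := rfl
        _ < s := hlt
        _ < ε := hsε
    · have hX : ¬ AccPt (0 : ℝ) (𝓟 (distSetM X)) := fun h => hY (hac.mp h)
      obtain ⟨δ, hδ, hsep⟩ := aux_gap hX
      refine ⟨δ, hδ, fun a hab => ?_⟩
      have hab2 : a = b := hsep a b hab
      simpa [hab2] using hε
  · -- continuity of Φ⁻¹
    rw [Metric.continuous_iff]
    intro b ε hε
    have hkey : ∀ y y' : Y, dist (e0.symm y) (e0.symm y') = f (dist y y') := by
      intro y y'
      have h := heq (e0.symm y) (e0.symm y')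
      rwa [hΦsymm, hΦsymm] at h
    by_cases hX : AccPt (0 : ℝ) (𝓟 (distSetM X))
    · obtain ⟨r, ⟨u, v, huv⟩, hr0, hrε⟩ := aux_acc hX hε
      have hr : r = f (dist (Φ u) (Φ v)) := by rw [← huv]; exact heq u v
      have hsY : dist (Φ u) (Φ v) ∈ distSetM Y := hdistY _ _
      have hs0 : 0 < dist (Φ u) (Φ v) := by
        by_contra hle
        push_neg at hle
        have h0 : dist (Φ u) (Φ v) = 0 := le_antisymm hle dist_nonneg
        rw [h0, hf0 u] at hr
        exact hr0.ne' hr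
      refine ⟨dist (Φ u) (Φ v), hs0, fun a hab => ?_⟩
      show dist (e0.symm a) (e0.symm b) < ε
      rw [hkey a b]
      have : f (dist a b) < f (dist (Φ u) (Φ v)) := hmono (hdistY a b) hsY hab
      rw [← hr] at this
      exact this.trans hrε
    · have hY : ¬ AccPt (0 : ℝ) (𝓟 (distSetM Y)) := fun h => hX (hac.mpr h)
      obtain ⟨δ, hδ, hsep⟩ := aux_gap hY
      refine ⟨δ, hδ, fun a hab => ?_⟩
      have hab2 : a = b := hsep a b hab
      show dist (e0.symm a) (e0.symm b) < ε
      simpa [hab2] using hε
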